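/- Let P ⊆ ℝⁿ be a simple polygon with finitely many vertices whose vertices are not all collinear (i.e., P is not contained in a straight line), and let p ≥ 1. Then the global curvature energy of P is infinite: U_p(P) = ∞. -/

import Mathlib

open MeasureTheory Real
open scoped ENNReal NNReal Classical

/-- The Menger curvature of three points in `ℝⁿ`: the reciprocal of the circumradius,
`κ(x,y,z) = 2 dist(z, L_{x,y}) / (|x-z| |y-z|)` for pairwise distinct non-collinear points,
and `0` otherwise. -/
noncomputable def menger {n : ℕ} (x y z : EuclideanSpace ℝ (Fin n)) : ℝ :=
  if x ≠ y ∧ y ≠ z ∧ x ≠ z ∧ ¬ Collinear ℝ ({x, y, z} : Set (EuclideanSpace ℝ (Fin n)))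
  then 2 * Metric.infDist z (affineSpan ℝ ({x, y} : Set (EuclideanSpace ℝ (Fin n))) :
      Set (EuclideanSpace ℝ (Fin n))) / (dist x z * dist y z)
  else 0

/-- The point `(a, b) ∈ ℝ²` (with the Euclidean metric). -/
noncomputable def pt (a b : ℝ) : EuclideanSpace ℝ (Fin 2) :=
  (WithLp.equiv 2 (Fin 2 → ℝ)).symm ![a, b]

/-- Integral Menger curvature `M_p(X)` (innermost integration in `x`). -/
noncomputable def Mp {n : ℕ} (p : ℝ) (X : Set (EuclideanSpace ℝ (Fin n))) : ℝ≥0∞ :=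
  ∫⁻ z in X, ∫⁻ y in X, ∫⁻ x in X,
    (ENNReal.ofReal (menger x y z)) ^ p ∂μH[1] ∂μH[1] ∂μH[1]

/-- Intermediate energy `I_p(X)`. -/
noncomputable def Ip {n : ℕ} (p : ℝ) (X : Set (EuclideanSpace ℝ (Fin n))) : ℝ≥0∞ :=
  ∫⁻ y in X, ∫⁻ x in X,
    (⨆ z ∈ X, ENNReal.ofReal (menger x y z)) ^ p ∂μH[1] ∂μH[1]

/-- Global curvature energy `U_p(X)`. -/
noncomputable def Up {n : ℕ} (p : ℝ) (X : Set (EuclideanSpace ℝ (Fin n))) : ℝ≥0∞ :=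
  ∫⁻ x in X, (⨆ y ∈ X, ⨆ z ∈ X, ENNReal.ofReal (menger x y z)) ^ p ∂μH[1]

/-- `P ⊆ ℝⁿ` is a simple polygon with finitely many vertices: there are `N ≥ 3` vertices
`v 0, …, v (N-1)` (consecutive ones distinct) such that `P` is the union of the closed
segments `S i = [v i, v (i+1)]`, `i = 0, …, N-2`, consecutive segments meet exactly in their
common vertex, and non-adjacent segments are disjoint. -/
def IsSimplePolygon {n : ℕ} (P : Set (EuclideanSpace ℝ (Fin n))) : Prop :=
  ∃ (N : ℕ) (v : ℕ → EuclideanSpace ℝ (Fin n)),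
    3 ≤ N ∧
    (∀ i, i + 1 < N → v i ≠ v (i + 1)) ∧
    P = ⋃ i ∈ Finset.range (N - 1), segment ℝ (v i) (v (i + 1)) ∧
    (∀ i, i + 2 < N →
      segment ℝ (v i) (v (i + 1)) ∩ segment ℝ (v (i + 1)) (v (i + 2)) = {v (i + 1)}) ∧
    (∀ i j, i + 2 ≤ j → j + 1 < N →
      segment ℝ (v i) (v (i + 1)) ∩ segment ℝ (v j) (v (j + 1)) = ∅)


set_option maxHeartbeats 1000000

section Aux
variable {n : ℕ}
local notation "E" => EuclideanSpace ℝ (Fin n)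
open Set

private lemma exists_corner (N : ℕ) (v : ℕ → E) (hN : 3 ≤ N)
    (hne : ∀ i, i + 1 < N → v i ≠ v (i + 1))
    (hcol : ¬ Collinear ℝ (⋃ i ∈ Finset.range (N - 1), segment ℝ (v i) (v (i + 1)))) :
    ∃ i, i + 2 < N ∧ ¬ Collinear ℝ ({v i, v (i+1), v (i+2)} : Set E) := by
  by_contra h
  push_neg at h
  apply hcol
  set L : AffineSubspace ℝ E := line[ℝ, v 0, v 1] with hL
  have hmem : ∀ j, j < N → v j ∈ L := by
    intro j
    induction j using Nat.strong_induction_on with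
    | _ j ih =>
      match j with
      | 0 => intro _; exact left_mem_affineSpan_pair ℝ _ _
      | 1 => intro _; exact right_mem_affineSpan_pair ℝ _ _
      | (k+2) =>
        intro hk
        have h1 : v k ∈ L := ih k (by omega) (by omega)
        have h2 : v (k+1) ∈ L := ih (k+1) (by omega) (by omega)
        have hc := h k hk
        have hne' : v k ≠ v (k+1) := hne k (by omega)
        have : v (k+2) ∈ line[ℝ, v k, v (k+1)] :=
          hc.mem_affineSpan_of_mem_of_ne (by simp) (by simp) (by simp) hne'
        exact affineSpan_pair_le_of_mem_of_mem h1 h2 this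
  have hsub : (⋃ i ∈ Finset.range (N - 1), segment ℝ (v i) (v (i + 1))) ⊆ (L : Set E) := by
    intro x hx
    simp only [Set.mem_iUnion] at hx
    obtain ⟨i, hi, hx⟩ := hx
    have hi' : i + 1 < N := by
      simp only [Finset.mem_range] at hi; omega
    exact L.convex.segment_subset (hmem i (by omega)) (hmem (i+1) hi') hx
  have : Collinear ℝ (L : Set E) := by
    rw [collinear_iff_exists_forall_eq_smul_vadd]
    refine ⟨v 0, v 1 -ᵥ v 0, fun p hp => ?_⟩
    have : (p -ᵥ v 0) +ᵥ v 0 ∈ line[ℝ, v 0, v 1] := by simpa using hp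
    obtain ⟨r, hr⟩ := vadd_left_mem_affineSpan_pair.1 this
    exact ⟨r, by rw [hr]; simp⟩
  exact this.subset hsub

private lemma corner_bound (a b c : E) (hK : ¬ Collinear ℝ ({a, b, c} : Set E)) :
    ∃ (u : E) (C ε : ℝ), 0 < C ∧ 0 < ε ∧ ε ≤ C ∧ ‖u‖ = 1 ∧
      ∀ s ∈ Ioc (0:ℝ) ε, s • u + b ∈ segment ℝ a b ∧
        ∃ y z, y ∈ segment ℝ a b ∧ z ∈ segment ℝ b c ∧ C / s ≤ menger (s • u + b) y z := by
  have hab : a ≠ b := ne₁₂_of_not_collinear hK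
  have hbc : b ≠ c := ne₂₃_of_not_collinear hK
  have hnab : (0:ℝ) < ‖a - b‖ := by rwa [norm_pos_iff, sub_ne_zero]
  have hncb : (0:ℝ) < ‖c - b‖ := by
    rw [norm_pos_iff, sub_ne_zero]; exact hbc.symm
  obtain ⟨u, hu_def⟩ : ∃ u : E, u = ‖a - b‖⁻¹ • (a - b) := ⟨_, rfl⟩
  obtain ⟨w, hw_def⟩ : ∃ w : E, w = ‖c - b‖⁻¹ • (c - b) := ⟨_, rfl⟩
  have hu : ‖u‖ = 1 := by
    rw [hu_def, norm_smul, norm_inv, norm_norm, inv_mul_cancel₀ hnab.ne']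
  have hw : ‖w‖ = 1 := by
    rw [hw_def, norm_smul, norm_inv, norm_norm, inv_mul_cancel₀ hncb.ne']
  set L : AffineSubspace ℝ E := line[ℝ, a, b] with hL
  have hbL : b ∈ L := right_mem_affineSpan_pair ℝ a b
  have hLne : (L : Set E).Nonempty := ⟨b, hbL⟩
  have hcbw : ‖c - b‖ • w = c - b := by
    rw [hw_def, smul_smul, mul_inv_cancel₀ hncb.ne', one_smul]
  -- w + b is not on the line L
  have hwb : w + b ∉ (L : Set E) := by
    intro hmem
    have hv : w +ᵥ b ∈ line[ℝ, a, b] := by rwa [vadd_eq_add]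
    obtain ⟨r, hr⟩ := vadd_right_mem_affineSpan_pair.1 hv
    rw [vsub_eq_sub] at hr
    have hcb : c - b = (‖c - b‖ * r) • (a - b) := by
      rw [← smul_smul, hr, hcbw]
    have hcmem : c ∈ line[ℝ, a, b] := by
      have h2 := smul_vsub_rev_vadd_mem_affineSpan_pair (k := ℝ) (‖c - b‖ * r) a b
      rwa [vsub_eq_sub, vadd_eq_add, ← hcb, sub_add_cancel] at h2
    have hcol : Collinear ℝ ({c, a, b} : Set E) :=
      collinear_insert_of_mem_affineSpan_pair hcmem
    exact hK (hcol.subset (by intro x hx; simp at hx ⊢; tauto))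
  obtain ⟨δ, hδ_def⟩ : ∃ δ : ℝ, δ = Metric.infDist (w + b) (L : Set E) := ⟨_, rfl⟩
  have hδ : 0 < δ := by
    rw [hδ_def]
    exact ((AffineSubspace.closed_of_finiteDimensional L).notMem_iff_infDist_pos hLne).1 hwb
  -- scaling of infDist
  have hscale : ∀ t : ℝ, 0 < t → t * δ ≤ Metric.infDist (t • w + b) (L : Set E) := by
    intro t ht
    rw [Metric.infDist_eq_iInf]
    have : Nonempty (L : Set E) := hLne.to_subtype
    refine le_ciInf fun q => ?_
    obtain ⟨q, hq⟩ := q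
    have hq' : t⁻¹ • (q - b) + b ∈ L := by
      have h1 : q -ᵥ b ∈ L.direction := AffineSubspace.vsub_mem_direction hq hbL
      have h2 : t⁻¹ • (q -ᵥ b) ∈ L.direction := L.direction.smul_mem _ h1
      have h3 := AffineSubspace.vadd_mem_of_mem_direction h2 hbL
      rwa [vsub_eq_sub, vadd_eq_add] at h3
    have hd : δ ≤ dist (w + b) (t⁻¹ • (q - b) + b) := by
      rw [hδ_def]; exact Metric.infDist_le_dist_of_mem hq'
    have hsub : (w + b) - (t⁻¹ • (q - b) + b) = w - t⁻¹ • (q - b) := by abel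
    have key : dist (t • w + b) q = t * dist (w + b) (t⁻¹ • (q - b) + b) := by
      rw [dist_eq_norm, dist_eq_norm, hsub, ← norm_smul_of_nonneg ht.le]
      congr 1
      rw [smul_sub, smul_smul, mul_inv_cancel₀ ht.ne', one_smul]
      abel
    rw [key]
    exact mul_le_mul_of_nonneg_left hd ht.le
  refine ⟨u, 2 * δ / 3, min ‖a - b‖ (min ‖c - b‖ (2 * δ / 3)), by positivity, by positivity,
    (min_le_right _ _).trans (min_le_right _ _), hu, ?_⟩
  rintro s ⟨hs0, hsε⟩
  have hsab : s ≤ ‖a - b‖ := hsε.trans (min_le_left _ _)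
  have hscb : s ≤ ‖c - b‖ := hsε.trans ((min_le_right _ _).trans (min_le_left _ _))
  obtain ⟨x, hx_def⟩ : ∃ x : E, x = s • u + b := ⟨_, rfl⟩
  obtain ⟨y, hy_def⟩ : ∃ y : E, y = (s / 2) • u + b := ⟨_, rfl⟩
  obtain ⟨z, hz_def⟩ : ∃ z : E, z = s • w + b := ⟨_, rfl⟩
  rw [← hx_def]
  have hsmul_u : ∀ r : ℝ, r • u = (r / ‖a - b‖) • (a - b) := by
    intro r; rw [hu_def, smul_smul, div_eq_mul_inv]
  have hsmul_w : s • w = (s / ‖c - b‖) • (c - b) := by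
    rw [hw_def, smul_smul, div_eq_mul_inv]
  -- segment memberships
  have hseg : ∀ r : ℝ, 0 ≤ r → r ≤ ‖a - b‖ → r • u + b ∈ segment ℝ a b := by
    intro r hr0 hr1
    rw [segment_symm, segment_eq_image']
    refine ⟨r / ‖a - b‖, ⟨by positivity, by rw [div_le_one hnab]; exact hr1⟩, ?_⟩
    show b + (r / ‖a - b‖) • (a - b) = r • u + b
    rw [← hsmul_u]; abel
  have hxseg : x ∈ segment ℝ a b := hx_def ▸ hseg s hs0.le hsab
  have hyseg : y ∈ segment ℝ a b := hy_def ▸ hseg (s / 2) (by positivity) (by linarith)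
  have hzseg : z ∈ segment ℝ b c := by
    rw [segment_eq_image']
    refine ⟨s / ‖c - b‖, ⟨by positivity, by rw [div_le_one hncb]; exact hscb⟩, ?_⟩
    show b + (s / ‖c - b‖) • (c - b) = z
    rw [← hsmul_w, hz_def]; abel
  -- memberships in L
  have hmemL : ∀ r : ℝ, r • u + b ∈ L := by
    intro r
    have h1 : (r • u) +ᵥ b ∈ line[ℝ, a, b] :=
      vadd_right_mem_affineSpan_pair.2 ⟨r / ‖a - b‖, by rw [vsub_eq_sub, ← hsmul_u]⟩
    rwa [vadd_eq_add] at h1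
  have hxL : x ∈ L := hx_def ▸ hmemL s
  have hyL : y ∈ L := hy_def ▸ hmemL (s / 2)
  have hzinf : s * δ ≤ Metric.infDist z (L : Set E) := hz_def ▸ hscale s hs0
  have hzL : z ∉ (L : Set E) := by
    intro hmem
    have h0 := Metric.infDist_zero_of_mem hmem
    nlinarith
  -- distances
  have hdistxb : dist x b = s := by
    rw [hx_def, dist_eq_norm, add_sub_cancel_right, norm_smul, hu, mul_one,
      Real.norm_eq_abs, abs_of_pos hs0]
  have hdistzb : dist b z = s := by
    rw [hz_def, dist_comm, dist_eq_norm, add_sub_cancel_right, norm_smul, hw, mul_one,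
      Real.norm_eq_abs, abs_of_pos hs0]
  have hdistyb : dist y b = s / 2 := by
    rw [hy_def, dist_eq_norm, add_sub_cancel_right, norm_smul, hu, mul_one,
      Real.norm_eq_abs, abs_of_pos (by positivity)]
  have hune : u ≠ 0 := by
    intro h; rw [h, norm_zero] at hu; norm_num at hu
  have hxy : x ≠ y := by
    intro h
    rw [hx_def, hy_def, add_left_inj] at h
    have h2 : (s - s / 2) • u = 0 := by rw [sub_smul, h, sub_self]
    rcases smul_eq_zero.1 h2 with h3 | h3
    · linarith
    · exact hune h3
  have hxz : x ≠ z := fun h => hzL (h ▸ hxL)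
  have hyz : y ≠ z := fun h => hzL (h ▸ hyL)
  have hdxz : dist x z ≤ 2 * s := by
    calc dist x z ≤ dist x b + dist b z := dist_triangle _ _ _
    _ = 2 * s := by rw [hdistxb, hdistzb]; ring
  have hdyz : dist y z ≤ 3 / 2 * s := by
    calc dist y z ≤ dist y b + dist b z := dist_triangle _ _ _
    _ = 3 / 2 * s := by rw [hdistyb, hdistzb]; ring
  -- noncollinearity
  have hline_le : line[ℝ, x, y] ≤ L := affineSpan_pair_le_of_mem_of_mem hxL hyL
  have hnc : ¬ Collinear ℝ ({x, y, z} : Set E) := by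
    intro hc
    have hz' : z ∈ line[ℝ, x, y] :=
      hc.mem_affineSpan_of_mem_of_ne (by simp) (by simp) (by simp) hxy
    exact hzL (hline_le hz')
  -- infDist to span {x, y}
  obtain ⟨D, hD_def⟩ : ∃ D : ℝ,
      D = Metric.infDist z (affineSpan ℝ ({x, y} : Set E) : Set E) := ⟨_, rfl⟩
  have hspan_sub : (line[ℝ, x, y] : Set E) ⊆ (L : Set E) := hline_le
  have hinf : s * δ ≤ D := by
    rw [hD_def]
    exact hzinf.trans (Metric.infDist_le_infDist_of_subset hspan_sub
      ⟨x, left_mem_affineSpan_pair ℝ x y⟩)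
  -- final bound
  refine ⟨hxseg, y, z, hyseg, hzseg, ?_⟩
  rw [menger, if_pos ⟨hxy, hyz, hxz, hnc⟩, ← hD_def]
  have hdxz0 : 0 < dist x z := dist_pos.2 hxz
  have hdyz0 : 0 < dist y z := dist_pos.2 hyz
  have hprod : dist x z * dist y z ≤ 3 * s ^ 2 := by nlinarith [dist_nonneg (x := x) (y := z)]
  have hD0 : 0 ≤ 2 * D := by nlinarith
  calc 2 * δ / 3 / s = 2 * (s * δ) / (3 * s ^ 2) := by field_simp
  _ ≤ 2 * D / (dist x z * dist y z) :=
      div_le_div₀ hD0 (by linarith) (by positivity) hprod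

private lemma main_aux (P : Set E) (a b c : E) (hK : ¬ Collinear ℝ ({a, b, c} : Set E))
    (hsegP : segment ℝ a b ⊆ P) (hsegP' : segment ℝ b c ⊆ P)
    (p : ℝ) (hp : 1 ≤ p) : Up p P = ⊤ := by
  obtain ⟨u, C, ε, hC, hε, hεC, hu, hbound⟩ := corner_bound a b c hK
  obtain ⟨f, hf_def⟩ : ∃ f : ℝ → E, f = fun t => t • u + b := ⟨_, rfl⟩
  have hf : Isometry f := by
    apply Isometry.of_dist_eq
    intro t₁ t₂
    rw [hf_def]
    simp only [dist_eq_norm]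
    have : t₁ • u + b - (t₂ • u + b) = (t₁ - t₂) • u := by
      rw [sub_smul]; abel
    rw [this, norm_smul, hu, mul_one, Real.norm_eq_abs]
  have hfme : MeasurableEmbedding f := hf.isClosedEmbedding.measurableEmbedding
  obtain ⟨A, hA_def⟩ : ∃ A : ℕ → Set E,
      A = fun k => f '' Ioc (ε / 2 ^ (k + 1)) (ε / 2 ^ k) := ⟨_, rfl⟩
  have hAmeas : ∀ k, MeasurableSet (A k) := by
    intro k; rw [hA_def]; exact hfme.measurableSet_image.2 measurableSet_Ioc
  have hAμ : ∀ k, μH[1] (A k) = ENNReal.ofReal (ε / 2 ^ (k + 1)) := by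
    intro k
    rw [hA_def]
    simp only []
    rw [hf.hausdorffMeasure_image (Or.inl zero_le_one), hausdorffMeasure_real, Real.volume_Ioc]
    congr 1
    field_simp
    ring
  have hAdisj : Pairwise (Function.onFun Disjoint A) := by
    intro k l hkl
    rw [hA_def]
    apply Set.disjoint_image_of_injective hf.injective
    rw [Set.Ioc_disjoint_Ioc]
    rcases hkl.lt_or_gt with h | h
    · refine le_trans (min_le_right _ _) (le_trans ?_ (le_max_left _ _))
      apply div_le_div_of_nonneg_left hε.le (by positivity)
      exact pow_le_pow_right₀ one_le_two h
    · refine le_trans (min_le_left _ _) (le_trans ?_ (le_max_right _ _))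
      apply div_le_div_of_nonneg_left hε.le (by positivity)
      exact pow_le_pow_right₀ one_le_two h
  have hIocsub : ∀ k : ℕ, Ioc (ε / 2 ^ (k + 1)) (ε / 2 ^ k) ⊆ Ioc 0 ε := by
    intro k t ht
    constructor
    · exact lt_of_le_of_lt (by positivity) ht.1
    · exact ht.2.trans (by
        apply div_le_self hε.le
        exact one_le_pow₀ one_le_two)
  have hsubP : ∀ k, A k ⊆ P := by
    intro k x hx
    rw [hA_def] at hx
    obtain ⟨t, ht, rfl⟩ := hx
    have := (hbound t (hIocsub k ht)).1
    rw [hf_def]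
    exact hsegP this
  -- pointwise bound
  have hptwise : ∀ k, ∀ x ∈ A k, ENNReal.ofReal (C * 2 ^ k / ε) ≤
      (⨆ y ∈ P, ⨆ z ∈ P, ENNReal.ofReal (menger x y z)) ^ p := by
    intro k x hx
    rw [hA_def] at hx
    obtain ⟨t, ht, rfl⟩ := hx
    have ht' := hIocsub k ht
    obtain ⟨hseg, y, z, hy, hz, hb⟩ := hbound t ht'
    have hyP : y ∈ P := hsegP hy
    have hzP : z ∈ P := hsegP' hz
    have hG : ENNReal.ofReal (C / t) ≤ ⨆ y ∈ P, ⨆ z ∈ P, ENNReal.ofReal (menger (f t) y z) := by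
      have h1 : ENNReal.ofReal (C / t) ≤ ENNReal.ofReal (menger (f t) y z) := by
        apply ENNReal.ofReal_le_ofReal
        rw [hf_def]; exact hb
      refine h1.trans ?_
      have h2 : ENNReal.ofReal (menger (f t) y z) ≤
          ⨆ z ∈ P, ENNReal.ofReal (menger (f t) y z) := le_iSup₂_of_le z hzP le_rfl
      exact h2.trans (le_iSup₂_of_le y hyP le_rfl)
    have h1le : (1 : ℝ≥0∞) ≤ ENNReal.ofReal (C / t) := by
      rw [ENNReal.one_le_ofReal]
      rw [le_div_iff₀ ht'.1]
      simpa using ht'.2.trans hεC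
    have hGp : ⨆ y ∈ P, ⨆ z ∈ P, ENNReal.ofReal (menger (f t) y z) ≤
        (⨆ y ∈ P, ⨆ z ∈ P, ENNReal.ofReal (menger (f t) y z)) ^ p := by
      nth_rewrite 1 [← ENNReal.rpow_one (⨆ y ∈ P, ⨆ z ∈ P, ENNReal.ofReal (menger (f t) y z))]
      exact ENNReal.rpow_le_rpow_of_exponent_le (h1le.trans hG) hp
    refine le_trans ?_ (hG.trans hGp)
    apply ENNReal.ofReal_le_ofReal
    rw [div_le_div_iff₀ hε (ht'.1)]
    have : t * 2 ^ k ≤ ε := by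
      rw [← le_div_iff₀ (by positivity)]
      exact ht.2
    nlinarith
  -- assemble
  rw [← top_le_iff, Up]
  calc (⊤ : ℝ≥0∞) = ∑' _ : ℕ, ENNReal.ofReal (C / 2) := by
        rw [ENNReal.tsum_const_eq_top_of_ne_zero]
        simp only [ne_eq, ENNReal.ofReal_eq_zero, not_le]
        positivity
  _ ≤ ∑' k : ℕ, ∫⁻ x in A k, (⨆ y ∈ P, ⨆ z ∈ P, ENNReal.ofReal (menger x y z)) ^ p ∂μH[1] := by
        apply ENNReal.tsum_le_tsum
        intro k
        calc ENNReal.ofReal (C / 2)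
            = ENNReal.ofReal (C * 2 ^ k / ε) * ENNReal.ofReal (ε / 2 ^ (k + 1)) := by
              rw [← ENNReal.ofReal_mul (by positivity)]
              congr 1
              field_simp
              ring
        _ = ENNReal.ofReal (C * 2 ^ k / ε) * μH[1] (A k) := by rw [hAμ k]
        _ = ∫⁻ _ in A k, ENNReal.ofReal (C * 2 ^ k / ε) ∂μH[1] := (setLIntegral_const _ _).symm
        _ ≤ _ := setLIntegral_mono' (hAmeas k) (hptwise k)
  _ = ∫⁻ x in ⋃ k, A k, (⨆ y ∈ P, ⨆ z ∈ P, ENNReal.ofReal (menger x y z)) ^ p ∂μH[1] :=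
        (lintegral_iUnion hAmeas hAdisj _).symm
  _ ≤ _ := lintegral_mono' (Measure.restrict_mono (iUnion_subset hsubP) le_rfl) le_rfl

end Aux

/-- A simple polygon not contained in a straight line has infinite global curvature
energy for `p ≥ 1`. -/
theorem Up_eq_top_of_isSimplePolygon {n : ℕ} (P : Set (EuclideanSpace ℝ (Fin n)))
    (hP : IsSimplePolygon P) (hcol : ¬ Collinear ℝ P) (p : ℝ) (hp : 1 ≤ p) :
    Up p P = ⊤ := by
  obtain ⟨N, v, hN3, hvne, hPeq, hcons, hdisj⟩ := hP
  have hcol' : ¬ Collinear ℝ (⋃ i ∈ Finset.range (N - 1), segment ℝ (v i) (v (i + 1))) := by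
    rwa [hPeq] at hcol
  obtain ⟨i, hiN, hK⟩ := exists_corner N v hN3 hvne hcol'
  have hseg1 : segment ℝ (v i) (v (i + 1)) ⊆ P := by
    rw [hPeq]
    exact fun x hx => Set.mem_biUnion (Finset.mem_range.2 (by omega)) hx
  have hseg2 : segment ℝ (v (i + 1)) (v (i + 2)) ⊆ P := by
    rw [hPeq]
    have hm : i + 1 ∈ Finset.range (N - 1) := Finset.mem_range.2 (by omega)
    exact fun x hx => Set.mem_biUnion (s := ↑(Finset.range (N - 1)))
      (t := fun j => segment ℝ (v j) (v (j + 1))) hm hx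
  exact main_aux P (v i) (v (i + 1)) (v (i + 2)) hK hseg1 hseg2 p hp
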